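/- Suppose there exists a real ε ∈ [0, 1/2) such that for all y ∈ 𝒴 and all x ∈ 𝒳 one has |π_X^y(x)/π_X(x) − 1| ≤ ε. Then for every function f : 𝒳 × 𝒴 → ℝ≥0, Ent f ≤ (1 + ε/(1−2ε)) · (E[Ent_X f] + E[Ent_Y f]). -/

import Mathlib

open scoped BigOperators Classical

noncomputable section

/-- Expectation of `f` under the (finitely supported) density `p`. -/
def pmean {α : Type*} [Fintype α] (p f : α → ℝ) : ℝ := ∑ a, p a * f a

/-- Variance of `f` under the density `p`. -/
def pvar {α : Type*} [Fintype α] (p f : α → ℝ) : ℝ :=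
  pmean p (fun a => (f a - pmean p f) ^ 2)

/-- Entropy of `f` under the density `p` (with the convention `0 log 0 = 0`,
which is automatic since `Real.log 0 = 0`). -/
def pent {α : Type*} [Fintype α] (p f : α → ℝ) : ℝ :=
  pmean p (fun a => f a * Real.log (f a)) - pmean p f * Real.log (pmean p f)

/-- Total variation distance between two densities. -/
def ptv {α : Type*} [Fintype α] (p q : α → ℝ) : ℝ := (1 / 2) * ∑ a, |p a - q a|

/-- Marginal on the first coordinate. -/
def margX {X Y : Type*} [Fintype X] [Fintype Y] (π : X × Y → ℝ) : X → ℝ :=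
  fun x => ∑ y, π (x, y)

/-- Marginal on the second coordinate. -/
def margY {X Y : Type*} [Fintype X] [Fintype Y] (π : X × Y → ℝ) : Y → ℝ :=
  fun y => ∑ x, π (x, y)

/-- Conditional distribution of the first coordinate given the second equals `y`. -/
def condX {X Y : Type*} [Fintype X] [Fintype Y] (π : X × Y → ℝ) (y : Y) : X → ℝ :=
  fun x => π (x, y) / margY π y

/-- Conditional distribution of the second coordinate given the first equals `x`. -/
def condY {X Y : Type*} [Fintype X] [Fintype Y] (π : X × Y → ℝ) (x : X) : Y → ℝ :=
  fun y => π (x, y) / margX π x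

open Set

private lemma chi_deriv {x : ℝ} (hx : 0 < x) :
    HasDerivAt (fun r : ℝ => (r + 1) * Real.log r - 2 * (r - 1)) (Real.log x + x⁻¹ - 1) x := by
  have h1 : HasDerivAt (fun r : ℝ => (r + 1) * Real.log r)
      (1 * Real.log x + (x + 1) * x⁻¹) x :=
    (((hasDerivAt_id x).add_const 1).mul (Real.hasDerivAt_log hx.ne'))
  have h2 : HasDerivAt (fun r : ℝ => 2 * (r - 1)) 2 x := by
    simpa using ((hasDerivAt_id x).sub_const 1).const_mul 2
  have := h1.sub h2
  refine this.congr_deriv ?_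
  rw [add_mul, mul_inv_cancel₀ hx.ne']
  ring

private lemma chi_deriv_nonneg {x : ℝ} (hx : 0 < x) : 0 ≤ Real.log x + x⁻¹ - 1 := by
  have := Real.one_sub_inv_le_log_of_pos hx
  linarith

private lemma chi_cont : ContinuousOn (fun r : ℝ => (r + 1) * Real.log r - 2 * (r - 1)) {0}ᶜ := by
  exact (((continuous_id.add continuous_const).continuousOn).mul Real.continuousOn_log).sub
    ((continuous_const.mul (continuous_id.sub continuous_const)).continuousOn)

private lemma chi_nonneg {r : ℝ} (hr : 1 ≤ r) : 0 ≤ (r + 1) * Real.log r - 2 * (r - 1) := by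
  have mono : MonotoneOn (fun r : ℝ => (r + 1) * Real.log r - 2 * (r - 1)) (Ici 1) := by
    apply monotoneOn_of_deriv_nonneg (convex_Ici 1)
    · exact chi_cont.mono (by intro x hx; simp at hx ⊢; intro h; rw [h] at hx; linarith)
    · intro x hx
      rw [interior_Ici] at hx
      exact (chi_deriv (by linarith [mem_Ioi.mp hx])).differentiableAt.differentiableWithinAt
    · intro x hx
      rw [interior_Ici] at hx
      have hx' : (0:ℝ) < x := by linarith [mem_Ioi.mp hx]
      rw [(chi_deriv hx').deriv]
      exact chi_deriv_nonneg hx'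
  have := mono (mem_Ici.mpr (le_refl 1)) (mem_Ici.mpr hr) hr
  simpa using this

private lemma chi_nonpos {r : ℝ} (hr0 : 0 < r) (hr : r ≤ 1) :
    (r + 1) * Real.log r - 2 * (r - 1) ≤ 0 := by
  have mono : MonotoneOn (fun r : ℝ => (r + 1) * Real.log r - 2 * (r - 1)) (Ioc 0 1) := by
    apply monotoneOn_of_deriv_nonneg (convex_Ioc 0 1)
    · exact chi_cont.mono (by intro x hx; simp at hx ⊢; intro h; rw [h] at hx; exact lt_irrefl 0 hx.1)
    · intro x hx
      have hx' : (0:ℝ) < x := (interior_subset hx).1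
      exact (chi_deriv hx').differentiableAt.differentiableWithinAt
    · intro x hx
      have hx' : (0:ℝ) < x := (interior_subset hx).1
      rw [(chi_deriv hx').deriv]
      exact chi_deriv_nonneg hx'
  have := mono (mem_Ioc.mpr ⟨hr0, hr⟩) (mem_Ioc.mpr ⟨one_pos, le_refl 1⟩) hr
  simpa using this

private lemma psi_deriv {x : ℝ} (hx : 0 < x) :
    HasDerivAt (fun r : ℝ => 2 * (r + 2) * (r * Real.log r - r + 1) - 3 * (r - 1) ^ 2)
      (4 * ((x + 1) * Real.log x - 2 * (x - 1))) x := by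
  have h1 : HasDerivAt (fun r : ℝ => r * Real.log r - r + 1) (Real.log x + 1 - 1) x :=
    ((Real.hasDerivAt_mul_log hx.ne').sub (hasDerivAt_id x)).add_const 1
  have h2 : HasDerivAt (fun r : ℝ => 2 * (r + 2)) 2 x := by
    simpa using ((hasDerivAt_id x).add_const 2).const_mul 2
  have h3 := h2.mul h1
  have h4 : HasDerivAt (fun r : ℝ => 3 * (r - 1) ^ 2) (3 * (2 * (x - 1))) x := by
    have h5 := (((hasDerivAt_id x).sub_const 1).pow 2).const_mul 3
    refine h5.congr_deriv ?_
    simp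
  have := h3.sub h4
  refine this.congr_deriv ?_
  ring

private lemma psi_cont : Continuous (fun r : ℝ => 2 * (r + 2) * (r * Real.log r - r + 1) - 3 * (r - 1) ^ 2) := by
  have h := Real.continuous_mul_log
  fun_prop

lemma key2 {r : ℝ} (hr : 0 ≤ r) : 3 * (r - 1) ^ 2 ≤ 2 * (r + 2) * (r * Real.log r - r + 1) := by
  set ψ := fun r : ℝ => 2 * (r + 2) * (r * Real.log r - r + 1) - 3 * (r - 1) ^ 2 with hψ
  have base : ψ 1 = 0 := by simp [hψ]
  have goal : 0 ≤ ψ r := by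
    rcases eq_or_lt_of_le hr with h0 | hr0
    · simp [hψ, ← h0]; norm_num
    rcases le_or_gt 1 r with h1 | h1
    · have mono : MonotoneOn ψ (Ici 1) := by
        apply monotoneOn_of_deriv_nonneg (convex_Ici 1)
        · exact psi_cont.continuousOn
        · intro x hx
          rw [interior_Ici] at hx
          exact (psi_deriv (by linarith [mem_Ioi.mp hx])).differentiableAt.differentiableWithinAt
        · intro x hx
          rw [interior_Ici] at hx
          have hx' : (1:ℝ) < x := mem_Ioi.mp hx
          rw [(psi_deriv (by linarith)).deriv]
          have := chi_nonneg hx'.le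
          linarith
      have := mono (mem_Ici.mpr (le_refl 1)) (mem_Ici.mpr h1) h1
      rw [base] at this; exact this
    · have anti : AntitoneOn ψ (Ioc 0 1) := by
        apply antitoneOn_of_deriv_nonpos (convex_Ioc 0 1)
        · exact psi_cont.continuousOn
        · intro x hx
          have hx' : (0:ℝ) < x := (interior_subset hx).1
          exact (psi_deriv hx').differentiableAt.differentiableWithinAt
        · intro x hx
          have hx' : (0:ℝ) < x := (interior_subset hx).1
          rw [(psi_deriv hx').deriv]
          have := chi_nonpos hx' ((mem_Ioc.mp (interior_subset hx)).2)
          linarith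
      have := anti (mem_Ioc.mpr ⟨hr0, h1.le⟩) (mem_Ioc.mpr ⟨one_pos, le_refl 1⟩) h1.le
      rw [base] at this; exact this
  simpa [hψ] using goal

lemma young (u a : ℝ) (hu : 0 ≤ u) (ha : 0 ≤ a) (hpos : u ≠ 0 → 0 < a) :
    u * Real.log a - u * Real.log u ≤ a - u := by
  rcases eq_or_lt_of_le hu with h0 | h0
  · simp [← h0]; exact ha
  · have ha' := hpos h0.ne'
    have h : Real.log a - Real.log u ≤ a / u - 1 := by
      have := Real.log_le_sub_one_of_pos (div_pos ha' h0)
      rwa [Real.log_div ha'.ne' h0.ne'] at this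
    calc u * Real.log a - u * Real.log u = u * (Real.log a - Real.log u) := by ring
      _ ≤ u * (a / u - 1) := by nlinarith
      _ = a - u := by field_simp

lemma pent_nonneg {α : Type*} [Fintype α] (p u : α → ℝ) (hp : ∀ a, 0 ≤ p a)
    (hps : ∑ a, p a = 1) (hu : ∀ a, 0 ≤ u a) : 0 ≤ pent p u := by
  set m := pmean p u with hm
  have hm0 : 0 ≤ m := Finset.sum_nonneg fun a _ => mul_nonneg (hp a) (hu a)
  have key : ∀ a, p a * (u a * Real.log m - u a * Real.log (u a)) ≤ p a * (m - u a) := by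
    intro a
    rcases eq_or_lt_of_le (hp a) with h0 | h0
    · rw [← h0]; simp
    · have hmu : u a ≠ 0 → 0 < m := by
        intro hua
        have h1 : 0 < p a * u a := mul_pos h0 (lt_of_le_of_ne (hu a) (Ne.symm hua))
        have h2 : p a * u a ≤ m := Finset.single_le_sum (f := fun a => p a * u a)
              (fun a _ => mul_nonneg (hp a) (hu a)) (Finset.mem_univ a)
        linarith
      exact mul_le_mul_of_nonneg_left (young (u a) m (hu a) hm0 hmu) h0.le
  have hsum := Finset.sum_le_sum (fun a (_ : a ∈ Finset.univ) => key a)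
  have e1 : ∑ a, p a * (u a * Real.log m - u a * Real.log (u a))
      = m * Real.log m - ∑ a, p a * (u a * Real.log (u a)) := by
    simp_rw [mul_sub]
    rw [Finset.sum_sub_distrib]
    congr 1
    have : ∀ a, p a * (u a * Real.log m) = p a * u a * Real.log m := fun a => by ring
    simp_rw [this]
    rw [← Finset.sum_mul, ← pmean, ← hm]
  have e2 : ∑ a, p a * (m - u a) = 0 := by
    simp_rw [mul_sub]
    rw [Finset.sum_sub_distrib]
    have : ∀ a, p a * m = m * p a := fun a => by ring
    simp_rw [this]
    rw [← Finset.mul_sum, hps, ← pmean, ← hm]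
    ring
  rw [e1, e2] at hsum
  have hms : (∑ a, p a * u a) = m := by rw [hm]; rfl
  have hpent : pent p u = (∑ a, p a * (u a * Real.log (u a))) - m * Real.log m := by
    simp only [pent, pmean]; rw [hms]
  rw [hpent]
  linarith

lemma pinsker {α : Type*} [Fintype α] (p u : α → ℝ) (hp : ∀ a, 0 < p a)
    (hps : ∑ a, p a = 1) (hu : ∀ a, 0 ≤ u a) :
    (∑ a, p a * |u a - pmean p u|) ^ 2 ≤ 2 * pmean p u * pent p u := by
  set m := pmean p u with hm
  have hm0 : 0 ≤ m := Finset.sum_nonneg fun a _ => mul_nonneg (hp a).le (hu a)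
  rcases eq_or_lt_of_le hm0 with h0 | h0
  · have hz : ∀ a, u a = 0 := by
      intro a
      by_contra hne
      have h1 : 0 < p a * u a := mul_pos (hp a) (lt_of_le_of_ne (hu a) (Ne.symm hne))
      have h2 : p a * u a ≤ m := Finset.single_le_sum (f := fun a => p a * u a)
          (fun a _ => mul_nonneg (hp a).le (hu a)) (Finset.mem_univ a)
      linarith
    have hs : ∑ a, p a * |u a - m| = 0 := by
      apply Finset.sum_eq_zero; intro a _; rw [hz a, ← h0]; simp
    rw [hs, ← h0]
    simp
  · have h3m : ∑ a, p a * (u a + 2 * m) = 3 * m := by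
      have e : ∀ a, p a * (u a + 2 * m) = p a * u a + 2 * m * p a := fun a => by ring
      simp_rw [e]
      rw [Finset.sum_add_distrib, ← Finset.mul_sum, hps, ← pmean, ← hm]
      ring
    have sed := Finset.sq_sum_div_le_sum_sq_div Finset.univ
      (fun a => p a * |u a - m|) (g := fun a => p a * (u a + 2 * m))
      (fun a _ => mul_pos (hp a) (by have := hu a; linarith))
    rw [h3m] at sed
    have hterm : ∀ a, (p a * |u a - m|) ^ 2 / (p a * (u a + 2 * m))
        ≤ p a * ((2:ℝ)/3 * (u a * Real.log (u a) - u a * Real.log m - u a + m)) := by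
      intro a
      have hd : 0 < u a + 2 * m := by have := hu a; linarith
      have e : (p a * |u a - m|) ^ 2 / (p a * (u a + 2 * m))
          = p a * ((u a - m) ^ 2 / (u a + 2 * m)) := by
        rw [mul_pow, sq_abs, pow_two, mul_assoc, mul_div_mul_left _ _ (hp a).ne',
          mul_div_assoc]
      rw [e]
      apply mul_le_mul_of_nonneg_left _ (hp a).le
      rcases eq_or_lt_of_le (hu a) with hz | hz
      · have hz' : u a = 0 := hz.symm
        rw [hz', div_le_iff₀ (by linarith)]
        simp only [Real.log_zero]
        nlinarith
      · have hr : 0 ≤ u a / m := div_nonneg (hu a) h0.le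
        have k := key2 hr
        rw [Real.log_div hz.ne' h0.ne'] at k
        have hm2 : (0:ℝ) < m ^ 2 := by positivity
        have k3 : 3 * (u a - m) ^ 2
            ≤ 2 * (u a + 2 * m) * (u a * Real.log (u a) - u a * Real.log m - u a + m) := by
          have step := mul_le_mul_of_nonneg_right k hm2.le
          calc 3 * (u a - m) ^ 2 = 3 * (u a / m - 1) ^ 2 * m ^ 2 := by field_simp
            _ ≤ 2 * (u a / m + 2) * (u a / m * (Real.log (u a) - Real.log m) - u a / m + 1) * m ^ 2 := step
            _ = 2 * (u a + 2 * m) * (u a * Real.log (u a) - u a * Real.log m - u a + m) := by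
                field_simp
        rw [div_le_iff₀ hd]
        linarith
    have hsum := Finset.sum_le_sum (fun a (_ : a ∈ Finset.univ) => hterm a)
    have e3 : ∑ a, p a * ((2:ℝ)/3 * (u a * Real.log (u a) - u a * Real.log m - u a + m))
        = (2:ℝ)/3 * pent p u := by
      have e : ∀ a, p a * ((2:ℝ)/3 * (u a * Real.log (u a) - u a * Real.log m - u a + m))
          = (2:ℝ)/3 * ((p a * (u a * Real.log (u a)) - p a * u a * Real.log m - p a * u a) + m * p a) := by
        intro a; ring
      simp_rw [e]
      rw [← Finset.mul_sum]
      congr 1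
      rw [Finset.sum_add_distrib, Finset.sum_sub_distrib, Finset.sum_sub_distrib,
        ← Finset.sum_mul, ← Finset.mul_sum, hps]
      have hms : (∑ a, p a * u a) = m := by rw [hm]; rfl
      have hpent : pent p u = (∑ a, p a * (u a * Real.log (u a))) - m * Real.log m := by
        simp only [pent, pmean]; rw [hms]
      rw [hpent, hms]
      ring
    rw [e3] at hsum
    have final := le_trans sed hsum
    rw [div_le_iff₀ (by linarith : (0:ℝ) < 3 * m)] at final
    calc (∑ a, p a * |u a - m|) ^ 2 ≤ 2/3 * pent p u * (3 * m) := final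
      _ = 2 * m * pent p u := by ring

/-- Algebraic chain rule for entropy. -/
lemma chain {A B : Type*} [Fintype A] [Fintype B] (w : A → ℝ) (κ : A → B → ℝ) (F : B → A → ℝ) :
    (∑ a, ∑ b, (w a * κ a b) * (F b a * Real.log (F b a)))
      - (∑ a, ∑ b, (w a * κ a b) * F b a) * Real.log (∑ a, ∑ b, (w a * κ a b) * F b a)
    = (∑ a, w a * pent (κ a) (fun b => F b a))
      + pent w (fun a => pmean (κ a) (fun b => F b a)) := by
  simp only [pent, pmean]
  simp_rw [mul_assoc, ← Finset.mul_sum, mul_sub]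
  rw [Finset.sum_sub_distrib]
  ring

/-- The duality / Young step, for one fixed row. -/
lemma dual_row {β : Type*} [Fintype β] (ν uu gg : β → ℝ) (hν : ∀ b, 0 < ν b)
    (hu : ∀ b, 0 ≤ uu b) (hg : ∀ b, 0 ≤ gg b) (hzero : ∀ b, gg b = 0 → uu b = 0)
    (m : ℝ) (hm : 0 < m) (hT : 0 < ∑ b, ν b * gg b) :
    ∑ b, ν b * (uu b * (Real.log (gg b) - Real.log m))
      ≤ pent ν uu + (∑ b, ν b * uu b) * Real.log ((∑ b, ν b * gg b) / m) := by
  have hpent : pent ν uu = (∑ b, ν b * (uu b * Real.log (uu b)))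
      - (∑ b, ν b * uu b) * Real.log (∑ b, ν b * uu b) := rfl
  set c := ∑ b, ν b * uu b with hc
  set S := ∑ b, ν b * gg b with hS
  have hc0 : 0 ≤ c := Finset.sum_nonneg fun b _ => mul_nonneg (hν b).le (hu b)
  rcases eq_or_lt_of_le hc0 with h0 | h0
  · -- c = 0 : uu ≡ 0
    have hz : ∀ b, uu b = 0 := by
      intro b
      have := (Finset.sum_eq_zero_iff_of_nonneg
        (fun b _ => mul_nonneg (hν b).le (hu b))).mp h0.symm b (Finset.mem_univ b)
      rcases mul_eq_zero.mp this with h | h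
      · exact absurd h (hν b).ne'
      · exact h
    have e1 : ∑ b, ν b * (uu b * (Real.log (gg b) - Real.log m)) = 0 :=
      Finset.sum_eq_zero fun b _ => by rw [hz b]; ring
    have e2 : ∑ b, ν b * (uu b * Real.log (uu b)) = 0 :=
      Finset.sum_eq_zero fun b _ => by rw [hz b]; ring
    rw [e1, hpent, e2, ← h0]
    simp
  · -- c > 0
    set T := S / m with hTdef
    have hTpos : 0 < T := div_pos hT hm
    set aa := fun b => gg b * c / S with haa
    have key : ∑ b, ν b * (uu b * (Real.log (gg b) - Real.log m + (Real.log c - Real.log T))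
        - uu b * Real.log (uu b)) ≤ ∑ b, ν b * (aa b - uu b) := by
      apply Finset.sum_le_sum
      intro b _
      apply mul_le_mul_of_nonneg_left _ (hν b).le
      rcases eq_or_lt_of_le (hu b) with hub | hub
      · have haa0 : 0 ≤ aa b := by
          rw [haa]
          exact div_nonneg (mul_nonneg (hg b) hc0) hT.le
        rw [← hub]
        simpa using haa0
      · have hgb : 0 < gg b := by
          rcases eq_or_lt_of_le (hg b) with h | h
          · exact absurd (hzero b h.symm) hub.ne'
          · exact h
        have haab : 0 < aa b := by
          rw [haa]
          exact div_pos (mul_pos hgb h0) hT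
        have hlog : Real.log (gg b) - Real.log m + (Real.log c - Real.log T)
            = Real.log (aa b) := by
          rw [haa, hTdef]
          rw [Real.log_div (mul_pos hgb h0).ne' hT.ne', Real.log_mul hgb.ne' h0.ne',
            Real.log_div hT.ne' hm.ne']
          ring
        rw [hlog]
        exact young (uu b) (aa b) (hu b) haab.le (fun _ => haab)
    have hsuma : ∑ b, ν b * (aa b - uu b) = 0 := by
      simp_rw [haa, mul_sub]
      rw [Finset.sum_sub_distrib]
      have : ∀ b, ν b * (gg b * c / S) = (ν b * gg b) * (c / S) := fun b => by ring
      simp_rw [this]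
      rw [← Finset.sum_mul, ← hS, ← hc]
      field_simp
      ring
    rw [hsuma] at key
    have expand : ∑ b, ν b * (uu b * (Real.log (gg b) - Real.log m + (Real.log c - Real.log T))
        - uu b * Real.log (uu b))
        = (∑ b, ν b * (uu b * (Real.log (gg b) - Real.log m)))
          + c * (Real.log c - Real.log T)
          - ∑ b, ν b * (uu b * Real.log (uu b)) := by
      have e : ∀ b, ν b * (uu b * (Real.log (gg b) - Real.log m + (Real.log c - Real.log T))
          - uu b * Real.log (uu b))
          = ν b * (uu b * (Real.log (gg b) - Real.log m))
            + (ν b * uu b) * (Real.log c - Real.log T)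
            - ν b * (uu b * Real.log (uu b)) := fun b => by ring
      simp_rw [e]
      rw [Finset.sum_sub_distrib, Finset.sum_add_distrib, ← Finset.sum_mul, ← hc]
    rw [expand] at key
    rw [hpent]
    linarith [key]

set_option maxHeartbeats 1000000 in
/-- **Two-variable factorization of entropy with weak correlation.**
If `|π_X^y(x)/π_X(x) - 1| ≤ ε` for all `x, y` with `0 ≤ ε < 1/2`, then
`Ent f ≤ (1 + ε/(1-2ε)) (E[Ent_X f] + E[Ent_Y f])` for all nonnegative `f`. -/
theorem ent_factorization_weak_correlation
    {X Y : Type*} [Fintype X] [Fintype Y] [Nonempty X] [Nonempty Y]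
    (π : X × Y → ℝ) (hnn : ∀ z, 0 ≤ π z) (hsum : ∑ z, π z = 1)
    (hX : ∀ x, 0 < margX π x) (hY : ∀ y, 0 < margY π y)
    (ε : ℝ) (hε0 : 0 ≤ ε) (hε1 : ε < 1 / 2)
    (hcorr : ∀ y x, |condX π y x / margX π x - 1| ≤ ε)
    (f : X × Y → ℝ) (hf : ∀ z, 0 ≤ f z) :
    pent π f ≤ (1 + ε / (1 - 2 * ε)) *
      ((∑ y, margY π y * pent (condX π y) (fun x => f (x, y))) +
       (∑ x, margX π x * pent (condY π x) (fun y => f (x, y)))) := by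
  have h2ε : 0 < 1 - 2 * ε := by linarith
  -- positivity of π
  have hπpos : ∀ x y, 0 < π (x, y) := by
    intro x y
    have h1 := abs_le.mp (hcorr y x)
    have h2 : 0 < condX π y x / margX π x := by nlinarith [h1.1]
    have h3 : 0 < condX π y x := by
      have := mul_pos h2 (hX x)
      rwa [div_mul_cancel₀ _ (hX x).ne'] at this
    have := mul_pos h3 (hY y)
    rwa [condX, div_mul_cancel₀ _ (hY y).ne'] at this
  have hκpos : ∀ y x, 0 < condX π y x := fun y x => div_pos (hπpos x y) (hY y)
  have hνpos : ∀ x y, 0 < condY π x y := fun x y => div_pos (hπpos x y) (hX x)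
  have hfacY : ∀ x y, condX π y x * margY π y = π (x, y) := fun x y =>
    div_mul_cancel₀ _ (hY y).ne'
  have hfacX : ∀ x y, condY π x y * margX π x = π (x, y) := fun x y =>
    div_mul_cancel₀ _ (hX x).ne'
  have hκsum : ∀ y, ∑ x, condX π y x = 1 := by
    intro y
    simp only [condX]
    rw [← Finset.sum_div]
    exact div_self (hY y).ne'
  have hνsum : ∀ x, ∑ y, condY π x y = 1 := by
    intro x
    simp only [condY]
    rw [← Finset.sum_div]
    exact div_self (hX x).ne'
  have hpYsum : ∑ y, margY π y = 1 := by
    rw [← hsum, Fintype.sum_prod_type]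
    exact Finset.sum_comm
  have hpXsum : ∑ x, margX π x = 1 := by
    rw [← hsum, Fintype.sum_prod_type]
    rfl
  set gfun : Y → ℝ := fun y => pmean (condX π y) (fun x => f (x, y)) with hgdef
  set hfun : X → ℝ := fun x => pmean (condY π x) (fun y => f (x, y)) with hhdef
  set m := pmean π f with hmdef
  have hg0 : ∀ y, 0 ≤ gfun y := fun y =>
    Finset.sum_nonneg fun x _ => mul_nonneg (hκpos y x).le (hf (x, y))
  have hh0 : ∀ x, 0 ≤ hfun x := fun x =>
    Finset.sum_nonneg fun y _ => mul_nonneg (hνpos x y).le (hf (x, y))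
  have hm0 : 0 ≤ m := Finset.sum_nonneg fun z _ => mul_nonneg (hnn z) (hf z)
  have F4Y : ∀ y, margY π y * gfun y = ∑ x, π (x, y) * f (x, y) := by
    intro y
    rw [hgdef]
    simp only [pmean]
    rw [Finset.mul_sum]
    exact Finset.sum_congr rfl fun x _ => by rw [← hfacY x y]; ring
  have F4X : ∀ x, margX π x * hfun x = ∑ y, π (x, y) * f (x, y) := by
    intro x
    rw [hhdef]
    simp only [pmean]
    rw [Finset.mul_sum]
    exact Finset.sum_congr rfl fun y _ => by rw [← hfacX x y]; ring
  have F5Y : ∑ y, margY π y * gfun y = m := by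
    simp_rw [F4Y]
    rw [hmdef]
    simp only [pmean]
    rw [Fintype.sum_prod_type]
    exact Finset.sum_comm
  have F5X : ∑ x, margX π x * hfun x = m := by
    simp_rw [F4X]
    rw [hmdef]
    simp only [pmean]
    rw [Fintype.sum_prod_type]
  -- ratio bound
  have F6 : ∀ x y, |condY π x y - margY π y| ≤ ε * margY π y := by
    intro x y
    have hratio : condY π x y / margY π y = condX π y x / margX π x := by
      rw [div_eq_div_iff (hY y).ne' (hX x).ne', hfacX x y, hfacY x y]
    have e : condY π x y - margY π y = margY π y * (condY π x y / margY π y - 1) := by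
      have hy' := (hY y).ne'
      field_simp
    rw [e, abs_mul, abs_of_pos (hY y), hratio, mul_comm]
    exact mul_le_mul_of_nonneg_right (hcorr y x) (hY y).le
  -- chain rules
  have eπ : ∀ F : X × Y → ℝ, pmean π F = ∑ y, ∑ x, π (x, y) * F (x, y) := by
    intro F
    simp only [pmean]
    rw [Fintype.sum_prod_type]
    exact Finset.sum_comm
  have chainY : pent π f = (∑ y, margY π y * pent (condX π y) (fun x => f (x, y)))
      + pent (margY π) gfun := by
    have hc := chain (margY π) (condX π) (fun x y => f (x, y))
    have hfac : ∀ (G : X × Y → ℝ), (∑ y, ∑ x, (margY π y * condX π y x) * G (x, y))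
        = pmean π G := by
      intro G
      rw [eπ G]
      exact Finset.sum_congr rfl fun y _ => Finset.sum_congr rfl fun x _ => by
        rw [mul_comm (margY π y) (condX π y x), hfacY x y]
    rw [hfac (fun z => f z * Real.log (f z)), hfac f] at hc
    exact hc
  have chainX : pent π f = (∑ x, margX π x * pent (condY π x) (fun y => f (x, y)))
      + pent (margX π) hfun := by
    have hc := chain (margX π) (condY π) (fun y x => f (x, y))
    have hfac : ∀ (G : X × Y → ℝ), (∑ x, ∑ y, (margX π x * condY π x y) * G (x, y))
        = pmean π G := by
      intro G
      simp only [pmean]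
      rw [Fintype.sum_prod_type]
      exact Finset.sum_congr rfl fun x _ => Finset.sum_congr rfl fun y _ => by
        rw [mul_comm (margX π x) (condY π x y), hfacX x y]
    rw [hfac (fun z => f z * Real.log (f z)), hfac f] at hc
    exact hc
  set A := ∑ y, margY π y * pent (condX π y) (fun x => f (x, y)) with hA
  set B := ∑ x, margX π x * pent (condY π x) (fun y => f (x, y)) with hB
  set EY := pent (margY π) gfun with hEY
  set EX := pent (margX π) hfun with hEX
  have hA0 : 0 ≤ A := Finset.sum_nonneg fun y _ => mul_nonneg (hY y).le
    (pent_nonneg _ _ (fun x => (hκpos y x).le) (hκsum y) (fun x => hf (x, y)))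
  have hB0 : 0 ≤ B := Finset.sum_nonneg fun x _ => mul_nonneg (hX x).le
    (pent_nonneg _ _ (fun y => (hνpos x y).le) (hνsum x) (fun y => hf (x, y)))
  have hEX0 : 0 ≤ EX := pent_nonneg _ _ (fun x => (hX x).le) hpXsum hh0
  have hEY0 : 0 ≤ EY := pent_nonneg _ _ (fun y => (hY y).le) hpYsum hg0
  rcases eq_or_lt_of_le hm0 with hmz | hm
  · -- m = 0 : f ≡ 0
    have hf0 : ∀ z, f z = 0 := by
      intro z
      have hz := (Finset.sum_eq_zero_iff_of_nonneg
        (fun z _ => mul_nonneg (hnn z) (hf z))).mp hmz.symm z (Finset.mem_univ z)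
      have hπz : 0 < π z := by
        have := hπpos z.1 z.2
        simpa using this
      rcases mul_eq_zero.mp hz with h | h
      · exact absurd h hπz.ne'
      · exact h
    have hfz : f = fun _ => 0 := funext hf0
    rw [hA, hB, hfz]
    simp [pent, pmean]
  · -- m > 0
    have hgy : ∃ y, 0 < gfun y := by
      by_contra hcon
      push_neg at hcon
      have hz : ∀ y, gfun y = 0 := fun y => le_antisymm (hcon y) (hg0 y)
      have : m = 0 := by
        rw [← F5Y]
        exact Finset.sum_eq_zero fun y _ => by rw [hz y, mul_zero]
      linarith
    obtain ⟨y0, hy0⟩ := hgy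
    have hSpos : ∀ x, 0 < ∑ y, condY π x y * gfun y := by
      intro x
      have hle : condY π x y0 * gfun y0 ≤ ∑ y, condY π x y * gfun y :=
        Finset.single_le_sum (f := fun y => condY π x y * gfun y)
          (fun y _ => mul_nonneg (hνpos x y).le (hg0 y)) (Finset.mem_univ y0)
      have := mul_pos (hνpos x y0) hy0
      linarith
    set T : X → ℝ := fun x => (∑ y, condY π x y * gfun y) / m with hTdef
    have hTpos : ∀ x, 0 < T x := fun x => div_pos (hSpos x) hm
    -- duality step
    have hzero : ∀ y, gfun y = 0 → ∀ x, f (x, y) = 0 := by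
      intro y hy x
      have hy' : ∑ x', condX π y x' * f (x', y) = 0 := hy
      have := (Finset.sum_eq_zero_iff_of_nonneg
        (fun x' _ => mul_nonneg (hκpos y x').le (hf (x', y)))).mp hy' x (Finset.mem_univ x)
      rcases mul_eq_zero.mp this with h | h
      · exact absurd h (hκpos y x).ne'
      · exact h
    have hEYexp : EY = ∑ y, (margY π y * gfun y) * (Real.log (gfun y) - Real.log m) := by
      have hrfl : EY = (∑ y, margY π y * (gfun y * Real.log (gfun y)))
          - (∑ y, margY π y * gfun y) * Real.log (∑ y, margY π y * gfun y) := rfl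
      rw [hrfl, F5Y]
      simp_rw [mul_sub]
      rw [Finset.sum_sub_distrib, ← Finset.sum_mul, F5Y]
      congr 1
      exact Finset.sum_congr rfl fun y _ => by ring
    have step3 : ∑ y, (margY π y * gfun y) * (Real.log (gfun y) - Real.log m)
        = ∑ x, margX π x * (∑ y, condY π x y * (f (x, y) * (Real.log (gfun y) - Real.log m))) := by
      simp_rw [F4Y, Finset.sum_mul]
      rw [Finset.sum_comm]
      refine Finset.sum_congr rfl fun x _ => ?_
      rw [Finset.mul_sum]
      refine Finset.sum_congr rfl fun y _ => ?_
      rw [← hfacX x y]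
      ring
    have hdual : ∀ x, ∑ y, condY π x y * (f (x, y) * (Real.log (gfun y) - Real.log m))
        ≤ pent (condY π x) (fun y => f (x, y)) + hfun x * Real.log (T x) := by
      intro x
      exact dual_row (condY π x) (fun y => f (x, y)) gfun (hνpos x)
        (fun y => hf (x, y)) hg0 (fun y hy => hzero y hy x) m hm (hSpos x)
    have claim2 : EY ≤ B + ∑ x, margX π x * (hfun x * Real.log (T x)) := by
      rw [hEYexp, step3]
      calc ∑ x, margX π x * (∑ y, condY π x y * (f (x, y) * (Real.log (gfun y) - Real.log m)))
          ≤ ∑ x, margX π x * (pent (condY π x) (fun y => f (x, y)) + hfun x * Real.log (T x)) :=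
            Finset.sum_le_sum fun x _ => mul_le_mul_of_nonneg_left (hdual x) (hX x).le
        _ = B + ∑ x, margX π x * (hfun x * Real.log (T x)) := by
            simp_rw [mul_add]
            rw [Finset.sum_add_distrib, hB]
    -- covariance step
    set P := ∑ x, margX π x * |hfun x - m| with hP
    set Q := ∑ y, margY π y * |gfun y - m| with hQ
    have hP0 : 0 ≤ P := Finset.sum_nonneg fun x _ => mul_nonneg (hX x).le (abs_nonneg _)
    have hQ0 : 0 ≤ Q := Finset.sum_nonneg fun y _ => mul_nonneg (hY y).le (abs_nonneg _)
    have hsTx : ∑ x, margX π x * T x = 1 := by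
      simp_rw [hTdef, mul_div_assoc']
      rw [← Finset.sum_div]
      have e : ∑ x, margX π x * ∑ y, condY π x y * gfun y = m := by
        have e2 : ∀ x, margX π x * ∑ y, condY π x y * gfun y
            = ∑ y, π (x, y) * gfun y := by
          intro x
          rw [Finset.mul_sum]
          exact Finset.sum_congr rfl fun y _ => by rw [← hfacX x y]; ring
        simp_rw [e2]
        rw [Finset.sum_comm, ← F5Y]
        refine Finset.sum_congr rfl fun y _ => ?_
        simp only [margY]
        exact (Finset.sum_mul _ _ _).symm
      rw [e, div_self hm.ne']
    have hTsub : ∀ x, T x - 1 = (∑ y, (condY π x y - margY π y) * (gfun y - m)) / m := by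
      intro x
      have num : ∑ y, (condY π x y - margY π y) * (gfun y - m)
          = (∑ y, condY π x y * gfun y) - m := by
        have e : ∀ y, (condY π x y - margY π y) * (gfun y - m)
            = condY π x y * gfun y - m * condY π x y - margY π y * gfun y + m * margY π y := by
          intro y; ring
        simp_rw [e]
        rw [Finset.sum_add_distrib, Finset.sum_sub_distrib, Finset.sum_sub_distrib,
          ← Finset.mul_sum, ← Finset.mul_sum, hνsum x, F5Y, hpYsum]
        ring
      rw [num, hTdef]
      field_simp
    have c2 : ∑ x, margX π x * (hfun x * (T x - 1))
        = ∑ x, margX π x * ((hfun x - m) * (T x - 1)) := by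
      have e : ∀ x, margX π x * (hfun x * (T x - 1))
          = margX π x * ((hfun x - m) * (T x - 1)) + m * (margX π x * T x - margX π x) := by
        intro x; ring
      simp_rw [e]
      rw [Finset.sum_add_distrib, ← Finset.mul_sum, Finset.sum_sub_distrib, hsTx, hpXsum]
      simp
    have cbound : ∀ x, (hfun x - m) * (T x - 1) ≤ |hfun x - m| * (ε * Q) / m := by
      intro x
      rw [hTsub x]
      have habs : |∑ y, (condY π x y - margY π y) * (gfun y - m)| ≤ ε * Q := by
        calc |∑ y, (condY π x y - margY π y) * (gfun y - m)|
            ≤ ∑ y, |(condY π x y - margY π y) * (gfun y - m)| :=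
              Finset.abs_sum_le_sum_abs _ _
          _ ≤ ∑ y, (ε * margY π y) * |gfun y - m| := by
              refine Finset.sum_le_sum fun y _ => ?_
              rw [abs_mul]
              exact mul_le_mul_of_nonneg_right (F6 x y) (abs_nonneg _)
          _ = ε * Q := by
              rw [hQ, Finset.mul_sum]
              exact Finset.sum_congr rfl fun y _ => by ring
      have step : (hfun x - m) * (∑ y, (condY π x y - margY π y) * (gfun y - m))
          ≤ |hfun x - m| * (ε * Q) := by
        calc (hfun x - m) * (∑ y, (condY π x y - margY π y) * (gfun y - m))
            ≤ |(hfun x - m) * (∑ y, (condY π x y - margY π y) * (gfun y - m))| := le_abs_self _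
          _ = |hfun x - m| * |∑ y, (condY π x y - margY π y) * (gfun y - m)| := abs_mul _ _
          _ ≤ |hfun x - m| * (ε * Q) :=
              mul_le_mul_of_nonneg_left habs (abs_nonneg _)
      calc (hfun x - m) * ((∑ y, (condY π x y - margY π y) * (gfun y - m)) / m)
          = ((hfun x - m) * (∑ y, (condY π x y - margY π y) * (gfun y - m))) / m := by ring
        _ ≤ |hfun x - m| * (ε * Q) / m := div_le_div_of_nonneg_right step hm.le
    have c5 : ∑ x, margX π x * ((hfun x - m) * (T x - 1)) ≤ ε * (P * Q) / m := by
      calc ∑ x, margX π x * ((hfun x - m) * (T x - 1))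
          ≤ ∑ x, margX π x * (|hfun x - m| * (ε * Q) / m) :=
            Finset.sum_le_sum fun x _ => mul_le_mul_of_nonneg_left (cbound x) (hX x).le
        _ = ε * (P * Q) / m := by
            have e : ∀ x, margX π x * (|hfun x - m| * (ε * Q) / m)
                = (margX π x * |hfun x - m|) * (ε * Q / m) := fun x => by ring
            simp_rw [e]
            rw [← Finset.sum_mul, ← hP]
            ring
    have hPp : P ^ 2 ≤ 2 * m * EX := by
      have hpk := pinsker (margX π) hfun hX hpXsum hh0
      have hmeanX : pmean (margX π) hfun = m := F5X
      rw [hmeanX] at hpk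
      exact hpk
    have hQq : Q ^ 2 ≤ 2 * m * EY := by
      have hpk := pinsker (margY π) gfun hY hpYsum hg0
      have hmeanY : pmean (margY π) gfun = m := F5Y
      rw [hmeanY] at hpk
      exact hpk
    have c8 : P * Q ≤ m * (EX + EY) := by
      have hrhs : 0 ≤ m * (EX + EY) := mul_nonneg hm.le (add_nonneg hEX0 hEY0)
      have h1 : (P * Q) ^ 2 ≤ (m * (EX + EY)) ^ 2 := by
        calc (P * Q) ^ 2 = P ^ 2 * Q ^ 2 := by ring
          _ ≤ (2 * m * EX) * (2 * m * EY) :=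
              mul_le_mul hPp hQq (sq_nonneg Q) (by positivity)
          _ ≤ (m * (EX + EY)) ^ 2 := by
              nlinarith [mul_nonneg (mul_nonneg hm.le hm.le) (sq_nonneg (EX - EY))]
      exact le_of_pow_le_pow_left₀ two_ne_zero hrhs h1
    have claim3 : ∑ x, margX π x * (hfun x * Real.log (T x)) ≤ ε * (EX + EY) := by
      have c1 : ∑ x, margX π x * (hfun x * Real.log (T x))
          ≤ ∑ x, margX π x * (hfun x * (T x - 1)) := by
        refine Finset.sum_le_sum fun x _ => ?_
        refine mul_le_mul_of_nonneg_left ?_ (hX x).le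
        exact mul_le_mul_of_nonneg_left (Real.log_le_sub_one_of_pos (hTpos x)) (hh0 x)
      have cend : ε * (P * Q) / m ≤ ε * (EX + EY) := by
        rw [div_le_iff₀ hm]
        calc ε * (P * Q) ≤ ε * (m * (EX + EY)) := mul_le_mul_of_nonneg_left c8 hε0
          _ = ε * (EX + EY) * m := by ring
      linarith [c1, c2, c5, cend]
    have hEXeq : EX = pent π f - B := by linarith [chainX]
    have hEYeq : EY = pent π f - A := by linarith [chainY]
    have final : EY ≤ B + ε * (EX + EY) := by
      calc EY ≤ B + ∑ x, margX π x * (hfun x * Real.log (T x)) := claim2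
        _ ≤ B + ε * (EX + EY) := by linarith [claim3]
    rw [hEXeq, hEYeq] at final
    have coef : 1 + ε / (1 - 2 * ε) = (1 - ε) / (1 - 2 * ε) := by
      rw [eq_div_iff h2ε.ne', add_mul, div_mul_cancel₀ _ h2ε.ne']; ring
    rw [coef, div_mul_eq_mul_div, le_div_iff₀ h2ε]
    nlinarith [final, chainY]

end
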